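/- Let Σ = {a,ā,b,b̄,c,c̄}, k ≥ 1, m ≥ 1, and L = c·{ā,b̄}*·a^k·ā^k. Every NFA accepting H_k(L,m,m) = ⋃_{v ∈ {ā,b̄}^{≤m−1}} c·v·a^k·ā^k·v̄·c̄ has at least 2^m states. -/

import Mathlib

open Computability

/-- Reverse-complement of a word under the involution `bar`. -/
def wbar {S : Type} (bar : S → S) (w : List S) : List S := (w.map bar).reverse

/-- The set of `α`-prefixes of `w` of length at most `ℓ`. -/
def Pa {S : Type} (α w : List S) (ℓ : ℕ) : Language S :=
  {v | v ++ α <+: w ∧ v.length ≤ ℓ}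

/-- `α Σ* ᾱ` : words with prefix `α` and suffix `ᾱ`. -/
def Dom {S : Type} (bar : S → S) (α : List S) : Language S :=
  {z | ∃ β, z = α ++ β ++ wbar bar α}

/-- One-step parameterized hairpin completion with binding word `α`,
left bound `ℓ`, right bound `r`. -/
def HaP {S : Type} (bar : S → S) (α : List S) (ℓ r : ℕ) (L : Language S) : Language S :=
  {z | ∃ γ β, γ.length ≤ ℓ ∧ z = γ ++ α ++ β ++ wbar bar α ++ wbar bar γ ∧
      α ++ β ++ wbar bar α ++ wbar bar γ ∈ L} ⊔
  {z | ∃ γ β, γ.length ≤ r ∧ z = γ ++ α ++ β ++ wbar bar α ++ wbar bar γ ∧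
      γ ++ α ++ β ++ wbar bar α ∈ L}

/-- One-step parameterized hairpin completion `H_k(L,ℓ,r)`. -/
def HkP {S : Type} (bar : S → S) (k ℓ r : ℕ) (L : Language S) : Language S :=
  {z | ∃ α : List S, α.length = k ∧ z ∈ HaP bar α ℓ r L}

def HaIter {S : Type} (bar : S → S) (α : List S) (ℓ r : ℕ) (L : Language S) : ℕ → Language S
  | 0 => L
  | n + 1 => HaP bar α ℓ r (HaIter bar α ℓ r L n)

/-- Iterated parameterized hairpin completion `H_α*(L,ℓ,r)`. -/
def HaStar {S : Type} (bar : S → S) (α : List S) (ℓ r : ℕ) (L : Language S) : Language S :=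
  {z | ∃ n, z ∈ HaIter bar α ℓ r L n}

def HkIter {S : Type} (bar : S → S) (k ℓ r : ℕ) (L : Language S) : ℕ → Language S
  | 0 => L
  | n + 1 => HkP bar k ℓ r (HkIter bar k ℓ r L n)

/-- Iterated parameterized hairpin completion `H_k*(L,ℓ,r)`. -/
def HkStar {S : Type} (bar : S → S) (k ℓ r : ℕ) (L : Language S) : Language S :=
  {z | ∃ n, z ∈ HkIter bar k ℓ r L n}

/-- Unbounded two-sided hairpin completion `H_k(L)`. -/
def HU {S : Type} (bar : S → S) (k : ℕ) (L : Language S) : Language S :=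
  {z | ∃ γ α β, α.length = k ∧ z = γ ++ α ++ β ++ wbar bar α ++ wbar bar γ ∧
      (α ++ β ++ wbar bar α ++ wbar bar γ ∈ L ∨ γ ++ α ++ β ++ wbar bar α ∈ L)}

/-- Unbounded right-sided hairpin completion `RH_k(L)`. -/
def RHU {S : Type} (bar : S → S) (k : ℕ) (L : Language S) : Language S :=
  {z | ∃ γ α β, α.length = k ∧ z = γ ++ α ++ β ++ wbar bar α ++ wbar bar γ ∧
      γ ++ α ++ β ++ wbar bar α ∈ L}

def HUIter {S : Type} (bar : S → S) (k : ℕ) (L : Language S) : ℕ → Language S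
  | 0 => L
  | n + 1 => HU bar k (HUIter bar k L n)

/-- Iterated unbounded two-sided hairpin completion `H_k*(L)`. -/
def HUStar {S : Type} (bar : S → S) (k : ℕ) (L : Language S) : Language S :=
  {z | ∃ n, z ∈ HUIter bar k L n}

def RHUIter {S : Type} (bar : S → S) (k : ℕ) (L : Language S) : ℕ → Language S
  | 0 => L
  | n + 1 => RHU bar k (RHUIter bar k L n)

/-- Iterated unbounded right-sided hairpin completion `RH_k*(L)`. -/
def RHUStar {S : Type} (bar : S → S) (k : ℕ) (L : Language S) : Language S :=
  {z | ∃ n, z ∈ RHUIter bar k L n}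

/-- Image of a language under reverse-complement. -/
def barSet {S : Type} (bar : S → S) (A : Language S) : Language S := wbar bar '' A

/-- The alphabet `Σ = {a, ā, b, b̄, c, c̄}`. -/
inductive HpAb : Type
  | a | abar | b | bbar | c | cbar
deriving DecidableEq

/-- The involution pairing `a ↔ ā`, `b ↔ b̄`, `c ↔ c̄`. -/
def HpAb.inv : HpAb → HpAb
  | .a => .abar
  | .abar => .a
  | .b => .bbar
  | .bbar => .b
  | .c => .cbar
  | .cbar => .c

/-- The language `L = c · {ā,b̄}* · a^k · ā^k`. -/
def LHp (k : ℕ) : Language HpAb :=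
  {z | ∃ v : List HpAb, (∀ x ∈ v, x = HpAb.abar ∨ x = HpAb.bbar) ∧
    z = HpAb.c :: (v ++ List.replicate k HpAb.a ++ List.replicate k HpAb.abar)}

/-- `u^n`: the `n`-fold concatenation of the word `u`. -/
def wpow {S : Type} (u : List S) (n : ℕ) : List S := (List.replicate n u).flatten

section AuxNFA

variable {α' : Type u_1} {σ' : Type u_2} (M : NFA α' σ')

theorem NFAaux.evalFrom_append (S : Set σ') (x y : List α') :
    M.evalFrom S (x ++ y) = M.evalFrom (M.evalFrom S x) y :=
  List.foldl_append ..

theorem NFAaux.mem_evalFrom_iff {p : σ'} :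
    ∀ (y : List α') (S : Set σ'), p ∈ M.evalFrom S y ↔ ∃ q ∈ S, p ∈ M.evalFrom {q} y
  | [], S => by simp [NFA.evalFrom]
  | a :: y, S => by
    have e : ∀ T : Set σ', M.evalFrom T (a :: y) = M.evalFrom (M.stepSet T a) y := fun _ => rfl
    rw [e, NFAaux.mem_evalFrom_iff y]
    constructor
    · rintro ⟨r, hr, hp⟩
      rw [NFA.mem_stepSet] at hr
      obtain ⟨q, hq, hr⟩ := hr
      refine ⟨q, hq, ?_⟩
      rw [e, NFAaux.mem_evalFrom_iff y]
      exact ⟨r, by rw [NFA.mem_stepSet]; exact ⟨q, rfl, hr⟩, hp⟩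
    · rintro ⟨q, hq, hp⟩
      rw [e, NFAaux.mem_evalFrom_iff y] at hp
      obtain ⟨r, hr, hp⟩ := hp
      rw [NFA.mem_stepSet] at hr
      obtain ⟨q', hq', hr⟩ := hr
      rw [Set.mem_singleton_iff] at hq'
      rw [hq'] at hr
      exact ⟨r, by rw [NFA.mem_stepSet]; exact ⟨q, hq, hr⟩, hp⟩

theorem NFAaux.mem_accepts_append {x y : List α'} :
    x ++ y ∈ M.accepts ↔ ∃ q ∈ M.eval x, ∃ p ∈ M.accept, p ∈ M.evalFrom {q} y := by
  rw [NFA.mem_accepts]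
  constructor
  · rintro ⟨p, hp, hev⟩
    rw [NFAaux.evalFrom_append, NFAaux.mem_evalFrom_iff] at hev
    obtain ⟨q, hq, hev⟩ := hev
    exact ⟨q, hq, p, hp, hev⟩
  · rintro ⟨q, hq, p, hp, hev⟩
    refine ⟨p, hp, ?_⟩
    rw [NFAaux.evalFrom_append, NFAaux.mem_evalFrom_iff]
    exact ⟨q, hq, hev⟩

end AuxNFA

section AuxHp

open HpAb

theorem HpAb.inv_inv : ∀ x : HpAb, x.inv.inv = x := by
  intro x; cases x <;> rfl

theorem wbar_wbar (w : List HpAb) : wbar HpAb.inv (wbar HpAb.inv w) = w := by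
  have h : HpAb.inv ∘ HpAb.inv = id := funext HpAb.inv_inv
  simp [wbar, List.map_reverse, List.map_map, h]

theorem wbar_inj {u v : List HpAb} (h : wbar HpAb.inv u = wbar HpAb.inv v) : u = v := by
  have := congrArg (wbar HpAb.inv) h
  rwa [wbar_wbar, wbar_wbar] at this

theorem wbar_length (bar : HpAb → HpAb) (w : List HpAb) : (wbar bar w).length = w.length := by
  simp [wbar]

theorem wbar_replicate_a (k : ℕ) :
    wbar HpAb.inv (List.replicate k HpAb.a) = List.replicate k HpAb.abar := by
  simp [wbar, HpAb.inv]

theorem wbar_cons_c (v : List HpAb) :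
    wbar HpAb.inv (HpAb.c :: v) = wbar HpAb.inv v ++ [HpAb.cbar] := by
  simp [wbar, HpAb.inv]

/-- The predicate "is a barred non-c letter". -/
def pbHp : HpAb → Bool
  | .abar => true
  | .bbar => true
  | _ => false

theorem countP_wbar_eq_zero {v : List HpAb}
    (hv : ∀ x ∈ v, x = HpAb.abar ∨ x = HpAb.bbar) :
    (wbar HpAb.inv v).countP pbHp = 0 := by
  rw [List.countP_eq_zero]
  intro x hx
  simp only [wbar, List.mem_reverse, List.mem_map] at hx
  obtain ⟨y, hy, rfl⟩ := hx
  rcases hv y hy with rfl | rfl <;> decide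

theorem countP_allbar {v : List HpAb}
    (hv : ∀ x ∈ v, x = HpAb.abar ∨ x = HpAb.bbar) :
    v.countP pbHp = v.length := by
  rw [List.countP_eq_length]
  intro x hx
  rcases hv x hx with rfl | rfl <;> rfl

/-- Membership direction: the hairpin words are in `H_k(L,m,m)`. -/
theorem mem_HkP_of_form (k m : ℕ) (v : List HpAb)
    (hv : ∀ x ∈ v, x = HpAb.abar ∨ x = HpAb.bbar) (hlen : v.length + 1 ≤ m) :
    HpAb.c :: (v ++ List.replicate k HpAb.a ++ List.replicate k HpAb.abar
      ++ wbar HpAb.inv v ++ [HpAb.cbar]) ∈ HkP HpAb.inv k m m (LHp k) := by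
  refine ⟨List.replicate k HpAb.a, by simp, Or.inr ⟨HpAb.c :: v, [], by simpa using hlen, ?_, ?_⟩⟩
  · rw [wbar_replicate_a, wbar_cons_c]
    simp
  · exact ⟨v, hv, by rw [wbar_replicate_a]; simp⟩

/-- Shape lemma: every word of `H_k(L,m,m)` has the hairpin form. -/
theorem shape_of_mem_HkP (k m : ℕ) (hk : 1 ≤ k) {w : List HpAb}
    (hw : w ∈ HkP HpAb.inv k m m (LHp k)) :
    ∃ v, (∀ x ∈ v, x = HpAb.abar ∨ x = HpAb.bbar) ∧ v.length + 1 ≤ m ∧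
      w = HpAb.c :: (v ++ List.replicate k HpAb.a ++ List.replicate k HpAb.abar
        ++ wbar HpAb.inv v ++ [HpAb.cbar]) := by
  obtain ⟨α, hα, hw⟩ := hw
  have hαne : α ≠ [] := by
    intro h; rw [h] at hα; simp at hα; omega
  rcases hw with hleft | hright
  · -- left branch is impossible: the `L`-word would contain `c̄`
    exfalso
    obtain ⟨γ, β, hγ, hz, hu⟩ := hleft
    obtain ⟨v, hv, he⟩ := hu
    obtain ⟨h, t, rfl⟩ : ∃ h t, α = h :: t := by
      cases α with
      | nil => exact absurd rfl hαne
      | cons h t => exact ⟨h, t, rfl⟩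
    have hh : h = HpAb.c := by
      have := congrArg (fun l => l.head?) he
      simpa using this
    have hmem : HpAb.cbar ∈ (HpAb.c :: (v ++ List.replicate k HpAb.a
        ++ List.replicate k HpAb.abar)) := by
      rw [← he]
      have : HpAb.cbar ∈ wbar HpAb.inv (h :: t) := by
        rw [hh]
        simp [wbar, HpAb.inv]
      simp only [List.mem_append]
      exact Or.inl (Or.inr this)
    rcases List.mem_cons.mp hmem with h1 | h1
    · exact absurd h1 (by decide)
    rcases List.mem_append.mp h1 with h2 | h2
    · rcases List.mem_append.mp h2 with h3 | h3
      · rcases hv _ h3 with h4 | h4 <;> simp_all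
      · exact absurd (List.eq_of_mem_replicate h3) (by decide)
    · exact absurd (List.eq_of_mem_replicate h2) (by decide)
  · obtain ⟨γ, β, hγ, hz, hu⟩ := hright
    obtain ⟨v, hv, he⟩ := hu
    -- peel `wbar α = ā^k` off the right
    have he' : (γ ++ α ++ β) ++ wbar HpAb.inv α
        = (HpAb.c :: (v ++ List.replicate k HpAb.a)) ++ List.replicate k HpAb.abar := by
      simpa [List.append_assoc] using he
    have hlen' : (wbar HpAb.inv α).length = (List.replicate k HpAb.abar).length := by
      rw [wbar_length, hα, List.length_replicate]
    obtain ⟨he1, he2⟩ := List.append_inj' he' hlen'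
    have hαa : α = List.replicate k HpAb.a := by
      have := congrArg (wbar HpAb.inv) he2
      rw [wbar_wbar] at this
      rw [this]
      simp [wbar, HpAb.inv]
    -- now analyze γ ++ a^k ++ β = (c :: v) ++ a^k
    rw [hαa] at he1
    have he3 : γ ++ (List.replicate k HpAb.a ++ β)
        = (HpAb.c :: v) ++ List.replicate k HpAb.a := by
      simpa [List.append_assoc] using he1
    have hγβ : γ = HpAb.c :: v ∧ β = [] := by
      rcases List.append_eq_append_iff.mp he3 with ⟨t, ht1, ht2⟩ | ⟨s, hs1, hs2⟩
      · cases t with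
        | nil =>
          constructor
          · simpa using ht1.symm
          · have : List.replicate k HpAb.a ++ β
                = List.replicate k HpAb.a ++ ([] : List HpAb) := by simpa using ht2
            simpa using List.append_cancel_left this
        | cons x t' =>
          exfalso
          have hx : x = HpAb.a := by
            have hk' : ∃ k', k = k' + 1 := ⟨k - 1, by omega⟩
            obtain ⟨k', rfl⟩ := hk'
            have := congrArg (fun l => l.head?) ht2
            simpa [List.replicate_succ] using this.symm
          have hxmem : x ∈ HpAb.c :: v := by
            rw [ht1]
            simp
          rw [hx] at hxmem
          simp only [List.mem_cons] at hxmem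
          rcases hxmem with h1 | h1
          · exact absurd h1 (by decide)
          · rcases hv _ h1 with h2 | h2 <;> simp at h2
      · have hs0 : s = [] ∧ β = [] := by
          have := congrArg List.length hs2
          simp at this
          constructor
          · exact List.eq_nil_of_length_eq_zero (by omega)
          · exact List.eq_nil_of_length_eq_zero (by omega)
        obtain ⟨rfl, rfl⟩ := hs0
        exact ⟨by simpa using hs1, rfl⟩
    obtain ⟨hγc, hβ⟩ := hγβ
    refine ⟨v, hv, ?_, ?_⟩
    · have := hγ
      rw [hγc] at this
      simpa using this
    · rw [hz, hγc, hαa, hβ, wbar_replicate_a, wbar_cons_c]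
      simp

end AuxHp

/-- Every NFA accepting `H_k(L,m,m)` for `L = c·{ā,b̄}*·a^k·ā^k`
has at least `2^m` states. -/
theorem NFA_lower_bound (k m : ℕ) (hk : 1 ≤ k) (hm : 1 ≤ m)
    (σ : Type) [Fintype σ] (M : NFA HpAb σ)
    (hM : M.accepts = HkP HpAb.inv k m m (LHp k)) :
    2 ^ m ≤ Fintype.card σ := by
  classical
  obtain ⟨n, rfl⟩ : ∃ n, m = n + 1 := ⟨m - 1, by omega⟩
  set A := List.replicate k HpAb.a with hA
  set B := List.replicate k HpAb.abar with hB
  -- encoding of binary strings of length n over {ā, b̄}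
  let enc : (Fin n → Bool) → List HpAb :=
    fun f => List.ofFn (fun i => if f i then HpAb.abar else HpAb.bbar)
  have enc_len : ∀ f, (enc f).length = n := fun f => by simp [enc]
  have enc_bar : ∀ f, ∀ x ∈ enc f, x = HpAb.abar ∨ x = HpAb.bbar := by
    intro f x hx
    simp only [enc, List.mem_ofFn] at hx
    obtain ⟨i, rfl⟩ := hx
    by_cases h : f i <;> simp [h]
  have enc_inj : Function.Injective enc := by
    intro f g hfg
    rw [List.ofFn_inj] at hfg
    funext i
    have := congrFun hfg i
    by_cases hf : f i <;> by_cases hg : g i <;> simp_all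
  -- the split words
  let xw : (Fin n → Bool) → Bool → List HpAb := fun f i =>
    if i then HpAb.c :: (enc f ++ A ++ B) else HpAb.c :: (enc f ++ A)
  let yw : (Fin n → Bool) → Bool → List HpAb := fun f i =>
    if i then wbar HpAb.inv (enc f) ++ [HpAb.cbar]
    else B ++ wbar HpAb.inv (enc f) ++ [HpAb.cbar]
  have hsplit : ∀ f i, xw f i ++ yw f i
      = HpAb.c :: (enc f ++ A ++ B ++ wbar HpAb.inv (enc f) ++ [HpAb.cbar]) := by
    intro f i
    cases i <;> simp [xw, yw]
  have hacc : ∀ f (i : Bool), xw f i ++ yw f i ∈ M.accepts := by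
    intro f i
    rw [hsplit, hM]
    exact mem_HkP_of_form k (n + 1) (enc f) (enc_bar f) (by rw [enc_len])
  -- choose states on accepting runs
  have hex : ∀ f (i : Bool), ∃ q ∈ M.eval (xw f i),
      ∃ p ∈ M.accept, p ∈ M.evalFrom {q} (yw f i) :=
    fun f i => (NFAaux.mem_accepts_append M).mp (hacc f i)
  let F : ((Fin n → Bool) × Bool) → σ := fun fi => (hex fi.1 fi.2).choose
  have hF1 : ∀ f i, F (f, i) ∈ M.eval (xw f i) := fun f i => (hex f i).choose_spec.1
  have hF2 : ∀ f i, ∃ p ∈ M.accept, p ∈ M.evalFrom {F (f, i)} (yw f i) :=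
    fun f i => (hex f i).choose_spec.2
  -- counting helpers
  have hcount : ∀ (f : Fin n → Bool) (l : List HpAb),
      (HpAb.c :: (enc f ++ l)).countP pbHp = n + l.countP pbHp := by
    intro f l
    rw [List.countP_cons]
    simp only [List.countP_append, countP_allbar (enc_bar f), enc_len]
    rfl
  have hcA : A.countP pbHp = 0 := by rw [hA, List.countP_replicate]; rfl
  have hcB : B.countP pbHp = k := by rw [hB, List.countP_replicate]; rfl
  have hcbar : ([HpAb.cbar] : List HpAb).countP pbHp = 0 := by rfl
  -- shape analysis of a mixed accepted word
  have key : ∀ f g (i j : Bool), xw f i ++ yw g j ∈ M.accepts → f = g ∧ i = j := by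
    intro f g i j hmem
    rw [hM] at hmem
    obtain ⟨v, hv, hvlen, heq⟩ := shape_of_mem_HkP k (n + 1) hk hmem
    have hcv : v.countP pbHp = v.length := countP_allbar hv
    have hcwv : (wbar HpAb.inv v).countP pbHp = 0 := countP_wbar_eq_zero hv
    have hcwf : (wbar HpAb.inv (enc f)).countP pbHp = 0 := countP_wbar_eq_zero (enc_bar f)
    have hcwg : (wbar HpAb.inv (enc g)).countP pbHp = 0 := countP_wbar_eq_zero (enc_bar g)
    have hlenA : A.length = k := by rw [hA]; simp
    have hlenB : B.length = k := by rw [hB]; simp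
    -- count and length equations
    have hcnt := congrArg (List.countP pbHp) heq
    have hlen := congrArg List.length heq
    cases i <;> cases j
    · -- (false, false): the straight word
      simp only [xw, yw, if_neg Bool.false_ne_true, Bool.false_eq_true, if_false] at heq
      have heq2 : enc f ++ (A ++ (B ++ (wbar HpAb.inv (enc g) ++ [HpAb.cbar])))
          = v ++ (A ++ (B ++ (wbar HpAb.inv v ++ [HpAb.cbar]))) := by
        have h2 := heq
        simp only [List.cons_append, List.append_assoc] at h2
        injection h2
      have hvn : v.length = n := by
        have hc := congrArg (List.countP pbHp) heq2
        simp only [List.countP_append, countP_allbar (enc_bar f), enc_len,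
          hcA, hcB, hcbar, hcv, hcwv, hcwg] at hc
        omega
      obtain ⟨hfv, hrest⟩ := List.append_inj heq2 (by rw [enc_len, hvn])
      subst hfv
      have hrest2 := List.append_cancel_left hrest
      have hrest3 := List.append_cancel_left hrest2
      have hwg : wbar HpAb.inv (enc g) = wbar HpAb.inv (enc f) :=
        (List.append_inj' hrest3 rfl).1
      exact ⟨(enc_inj (wbar_inj hwg)).symm, rfl⟩
    · -- (false, true): length/count contradiction
      exfalso
      simp only [xw, yw, Bool.false_eq_true, if_false, if_true] at heq
      have hc := congrArg (List.countP pbHp) heq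
      have hl := congrArg List.length heq
      simp only [List.countP_cons, List.countP_append, countP_allbar (enc_bar f), ← hA, ← hB,
        enc_len, hcA, hcB, hcbar, hcv, hcwv, hcwg, List.length_cons, List.length_append,
        hlenA, hlenB, wbar_length, List.length_singleton] at hc hl
      have hpb : pbHp HpAb.c = false := rfl
      rw [hpb] at hc
      simp at hc
      omega
    · -- (true, false): length/count contradiction
      exfalso
      simp only [xw, yw, Bool.false_eq_true, if_false, if_true] at heq
      have hc := congrArg (List.countP pbHp) heq
      have hl := congrArg List.length heq
      simp only [List.countP_cons, List.countP_append, countP_allbar (enc_bar f), ← hA, ← hB,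
        enc_len, hcA, hcB, hcbar, hcv, hcwv, hcwg, List.length_cons, List.length_append,
        hlenA, hlenB, wbar_length, List.length_singleton] at hc hl
      have hpb : pbHp HpAb.c = false := rfl
      rw [hpb] at hc
      simp at hc
      omega
    · -- (true, true): same straight word
      simp only [xw, yw, if_true] at heq
      have heq2 : enc f ++ (A ++ (B ++ (wbar HpAb.inv (enc g) ++ [HpAb.cbar])))
          = v ++ (A ++ (B ++ (wbar HpAb.inv v ++ [HpAb.cbar]))) := by
        have h2 := heq
        simp only [List.cons_append, List.append_assoc] at h2
        injection h2
      have hvn : v.length = n := by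
        have hc := congrArg (List.countP pbHp) heq2
        simp only [List.countP_append, countP_allbar (enc_bar f), enc_len,
          hcA, hcB, hcbar, hcv, hcwv, hcwg] at hc
        omega
      obtain ⟨hfv, hrest⟩ := List.append_inj heq2 (by rw [enc_len, hvn])
      subst hfv
      have hrest2 := List.append_cancel_left hrest
      have hrest3 := List.append_cancel_left hrest2
      have hwg : wbar HpAb.inv (enc g) = wbar HpAb.inv (enc f) :=
        (List.append_inj' hrest3 rfl).1
      exact ⟨(enc_inj (wbar_inj hwg)).symm, rfl⟩
  -- F is injective
  have hFinj : Function.Injective F := by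
    rintro ⟨f, i⟩ ⟨g, j⟩ hFeq
    have hmix : xw f i ++ yw g j ∈ M.accepts := by
      obtain ⟨p, hp, hpe⟩ := hF2 g j
      exact (NFAaux.mem_accepts_append M).mpr ⟨F (g, j), hFeq ▸ hF1 f i, p, hp, hpe⟩
    obtain ⟨h1, h2⟩ := key f g i j hmix
    rw [h1, h2]
  calc 2 ^ (n + 1) = Fintype.card ((Fin n → Bool) × Bool) := by
        simp [Fintype.card_fun, pow_succ]
    _ ≤ Fintype.card σ := Fintype.card_le_of_injective F hFinj
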